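/- For every integer L ≥ 1: Σ_{1 ≤ i < j ≤ 2L} binom(i−1, ⌊i/2⌋) · binom(j−i−1, ⌊j/2⌋ − ⌊i/2⌋ − 1) · (1/2^j) = (L + 3/2) − (3L + 3/2) · binom(2L, L) / 4^L. -/

import Mathlib

open Finset

/-- Binomial coefficient with integer arguments: `0` whenever `b < 0` or `b > a`. -/
def ichoose (a b : ℤ) : ℕ := if 0 ≤ b ∧ b ≤ a then Nat.choose a.toNat b.toNat else 0

noncomputable def cb (n : ℕ) : ℝ := (Nat.centralBinom n : ℝ)
noncomputable def ct (n : ℕ) : ℝ := (catalan n : ℝ)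

lemma cb_pos (n : ℕ) : 0 < cb n := by
  unfold cb; exact_mod_cast Nat.centralBinom_pos n

lemma cb_rec (n : ℕ) : ((n:ℝ)+1) * cb (n+1) = (4*(n:ℝ)+2) * cb n := by
  have h := Nat.succ_mul_centralBinom_succ n
  have : (((n+1) * (n+1).centralBinom : ℕ) : ℝ) = ((2 * (2*n+1) * n.centralBinom : ℕ) : ℝ) := by
    rw [h]
  push_cast at this
  unfold cb; linarith

lemma cat_cb (n : ℕ) : ((n:ℝ)+1) * ct n = cb n := by
  have h := succ_mul_catalan_eq_centralBinom n
  have : (((n+1) * catalan n : ℕ) : ℝ) = (n.centralBinom : ℝ) := by rw [← h]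
  push_cast at this
  unfold ct cb; linarith

lemma cb_zero : cb 0 = 1 := by simp [cb, Nat.centralBinom]
lemma cb_one : cb 1 = 2 := by simp [cb]; rfl
lemma ct_zero : ct 0 = 1 := by simp [ct]

lemma cb_succ (n : ℕ) : cb (n+1) = 4 * cb n - 2 * ct n := by
  have h1 := cb_rec n
  have h2 := cat_cb n
  have hn : ((n:ℝ)+1) ≠ 0 := by positivity
  have : ((n:ℝ)+1) * cb (n+1) = ((n:ℝ)+1) * (4 * cb n - 2 * ct n) := by
    rw [h1]; ring_nf; nlinarith [h2]
  exact mul_left_cancel₀ hn this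

lemma sum_range_even (f : ℕ → ℝ) (n : ℕ) :
    ∑ i ∈ range (2*n), f i = (∑ m ∈ range n, f (2*m)) + ∑ m ∈ range n, f (2*m+1) := by
  induction n with
  | zero => simp
  | succ k ih =>
      have h2 : 2*(k+1) = (2*k+1)+1 := by ring
      rw [h2, sum_range_succ, sum_range_succ, sum_range_succ, sum_range_succ, ih]
      ring

lemma sum_range_odd (f : ℕ → ℝ) (n : ℕ) :
    ∑ i ∈ range (2*n+1), f i = (∑ m ∈ range (n+1), f (2*m)) + ∑ m ∈ range n, f (2*m+1) := by
  rw [sum_range_succ, sum_range_even, sum_range_succ]; ring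

-- weighted symmetry
lemma wsym (n : ℕ) :
    2 * (∑ m ∈ range (n+1), ((m:ℝ)+1) * (cb m * cb (n-m)))
      = ((n:ℝ)+2) * ∑ m ∈ range (n+1), cb m * cb (n-m) := by
  have hrefl := Finset.sum_range_reflect (fun m => ((m:ℝ)+1) * (cb m * cb (n-m))) (n+1)
  have hco : ∑ j ∈ range (n+1), ((((n+1) - 1 - j : ℕ):ℝ)+1) * (cb ((n+1)-1-j) * cb (n-((n+1)-1-j)))
      = ∑ j ∈ range (n+1), (((n:ℝ)-(j:ℝ))+1) * (cb j * cb (n-j)) := by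
    apply Finset.sum_congr rfl
    intro j hj
    have hjn : j ≤ n := by simpa [Nat.lt_succ_iff] using hj
    have h1 : (n+1) - 1 - j = n - j := by omega
    have h2 : n - (n - j) = j := by omega
    have h3 : ((n - j : ℕ):ℝ) = (n:ℝ) - (j:ℝ) := by
      push_cast [Nat.cast_sub hjn]; ring
    rw [h1, h2, h3, mul_comm (cb (n-j)) (cb j)]
  rw [hco] at hrefl
  calc 2 * (∑ m ∈ range (n+1), ((m:ℝ)+1) * (cb m * cb (n-m)))
      = (∑ m ∈ range (n+1), (((n:ℝ)-(m:ℝ))+1) * (cb m * cb (n-m)))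
        + ∑ m ∈ range (n+1), ((m:ℝ)+1) * (cb m * cb (n-m)) := by rw [hrefl]; ring
    _ = ∑ m ∈ range (n+1), ((n:ℝ)+2) * (cb m * cb (n-m)) := by
        rw [← Finset.sum_add_distrib]; apply Finset.sum_congr rfl; intro m _; ring
    _ = ((n:ℝ)+2) * ∑ m ∈ range (n+1), cb m * cb (n-m) := by rw [Finset.mul_sum]

lemma conv_cb (n : ℕ) : ∑ m ∈ range (n+1), cb m * cb (n-m) = 4^n := by
  induction n with
  | zero => simp [cb_zero]
  | succ n ih =>
      -- T(n+1) computation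
      have hsplit : ∑ m ∈ range (n+2), ((m:ℝ)+1) * (cb m * cb (n+1-m))
          = (∑ k ∈ range (n+1), (((k:ℝ)+1)+1) * (cb (k+1) * cb (n-k))) + 1 * (cb 0 * cb (n+1)) := by
        rw [Finset.sum_range_succ' (fun m => ((m:ℝ)+1) * (cb m * cb (n+1-m))) (n+1)]
        push_cast
        simp [Nat.succ_sub_succ]
      have hshift : ∀ k : ℕ, (((k:ℝ)+1)+1) * (cb (k+1) * cb (n-k))
          = (4*(k:ℝ)+2) * (cb k * cb (n-k)) + cb (k+1) * cb (n-k) := by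
        intro k
        have h := cb_rec k
        linear_combination cb (n-k) * h
      have hA1 : ∑ m ∈ range (n+2), cb m * cb (n+1-m)
          = (∑ k ∈ range (n+1), cb (k+1) * cb (n-k)) + cb 0 * cb (n+1) := by
        rw [Finset.sum_range_succ' (fun m => cb m * cb (n+1-m)) (n+1)]
        simp [Nat.succ_sub_succ]
      -- abbreviations
      set A1 : ℝ := ∑ m ∈ range (n+2), cb m * cb (n+1-m) with hA1def
      have hT1 : ∑ m ∈ range (n+2), ((m:ℝ)+1) * (cb m * cb (n+1-m))
          = (∑ k ∈ range (n+1), (4*(k:ℝ)+2) * (cb k * cb (n-k))) + A1 := by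
        rw [hsplit]
        rw [Finset.sum_congr rfl (fun k _ => hshift k)]
        rw [Finset.sum_add_distrib, hA1]
        ring
      have hmid : ∑ k ∈ range (n+1), (4*(k:ℝ)+2) * (cb k * cb (n-k))
          = 4 * (∑ k ∈ range (n+1), ((k:ℝ)+1) * (cb k * cb (n-k))) - 2 * ∑ k ∈ range (n+1), cb k * cb (n-k) := by
        rw [Finset.mul_sum, Finset.mul_sum, ← Finset.sum_sub_distrib]
        apply Finset.sum_congr rfl; intro k _; ring
      have hw_n := wsym n
      have hw_n1 := wsym (n+1)
      push_cast at hw_n1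
      -- combine: ((n+3)/2) A1 = (2n+2) * A n + A1
      have key : ((n:ℝ)+3) * A1 = (4*(n:ℝ)+4) * (4:ℝ)^n + 2*A1 := by
        have e1 : 2 * (∑ m ∈ range (n+2), ((m:ℝ)+1) * (cb m * cb (n+1-m))) = ((n:ℝ)+3) * A1 := by
          have := hw_n1
          convert this using 2 <;> ring
        rw [hT1] at e1
        rw [hmid] at e1
        rw [ih] at e1
        have e2 : 2 * (∑ k ∈ range (n+1), ((k:ℝ)+1) * (cb k * cb (n-k))) = ((n:ℝ)+2) * (4:ℝ)^n := by
          rw [hw_n, ih]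
        linear_combination -e1 + 4*e2
      have hA1val : A1 = 4^(n+1) := by
        have hne : ((n:ℝ)+1) ≠ 0 := by positivity
        have : ((n:ℝ)+1) * A1 = ((n:ℝ)+1) * 4^(n+1) := by
          rw [pow_succ]; linear_combination key
        exact mul_left_cancel₀ hne this
      exact hA1val

lemma geom_cat (n : ℕ) : cb n + 2 * ∑ m ∈ range n, ct m * 4^(n-1-m) = 4^n := by
  induction n with
  | zero => simp [cb_zero]
  | succ n ih =>
      rw [sum_range_succ]
      have hpow : ∀ m, m ∈ range n → ct m * (4:ℝ)^(n+1-1-m) = 4 * (ct m * 4^(n-1-m)) := by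
        intro m hm
        have hmn : m < n := mem_range.mp hm
        have : n+1-1-m = (n-1-m)+1 := by omega
        rw [this, pow_succ]; ring
      rw [Finset.sum_congr rfl hpow]
      have : ∑ m ∈ range n, 4 * (ct m * (4:ℝ)^(n-1-m)) = 4 * ∑ m ∈ range n, ct m * 4^(n-1-m) := by
        rw [Finset.mul_sum]
      rw [this, cb_succ, pow_succ]
      simp only [Nat.add_sub_cancel, Nat.sub_self, pow_zero, mul_one]
      linear_combination 4 * ih
      
lemma tri (f : ℕ → ℕ → ℝ) (n : ℕ) :
    ∑ k ∈ range (n+1), ∑ m ∈ range (k+1), f m (k-m)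
      = ∑ m ∈ range (n+1), ∑ t ∈ range (n+1-m), f m t := by
  induction n with
  | zero => simp
  | succ n ih =>
      have h1 : ∀ m, m ∈ range (n+1) → ∑ t ∈ range (n+2-m), f m t
          = (∑ t ∈ range (n+1-m), f m t) + f m (n+1-m) := by
        intro m hm
        have hm' := mem_range.mp hm
        have : n+2-m = (n+1-m)+1 := by omega
        rw [this, sum_range_succ]
      have e1 : ∑ k ∈ range (n+2), ∑ m ∈ range (k+1), f m (k-m)
          = (∑ k ∈ range (n+1), ∑ m ∈ range (k+1), f m (k-m)) + ∑ m ∈ range (n+2), f m (n+1-m) :=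
        sum_range_succ _ (n+1)
      have e2 : ∑ m ∈ range (n+2), ∑ t ∈ range (n+2-m), f m t
          = (∑ m ∈ range (n+1), ∑ t ∈ range (n+2-m), f m t) + ∑ t ∈ range (n+2-(n+1)), f (n+1) t :=
        sum_range_succ _ (n+1)
      have e3 : ∑ m ∈ range (n+1), ∑ t ∈ range (n+2-m), f m t
          = (∑ m ∈ range (n+1), ∑ t ∈ range (n+1-m), f m t) + ∑ m ∈ range (n+1), f m (n+1-m) := by
        rw [← Finset.sum_add_distrib]
        exact Finset.sum_congr rfl h1
      have e4 : ∑ m ∈ range (n+2), f m (n+1-m)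
          = (∑ m ∈ range (n+1), f m (n+1-m)) + f (n+1) (n+1-(n+1)) :=
        sum_range_succ _ (n+1)
      have h5 : n+1-(n+1) = 0 := by omega
      have h6 : n+2-(n+1) = 1 := by omega
      rw [e1, ih, e2, e3, e4, h5, h6, sum_range_one]
      ring

lemma conv_cat_cb (n : ℕ) : 2 * ∑ m ∈ range (n+1), ct m * cb (n-m) = cb (n+1) := by
  induction n using Nat.strong_induction_on with
  | _ n ih =>
  -- key relation: ∑_{k ≤ n} (cb (k+1) - 2 B k) * cb (n-k) = 0
  have hBsum : ∑ k ∈ range (n+1), (2 * ∑ m ∈ range (k+1), ct m * cb (k-m)) * cb (n-k)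
      = 4^(n+1) - cb (n+1) := by
    have h1 : ∑ k ∈ range (n+1), (2 * ∑ m ∈ range (k+1), ct m * cb (k-m)) * cb (n-k)
        = 2 * ∑ k ∈ range (n+1), ∑ m ∈ range (k+1), (fun m t => ct m * cb t * cb (n-m-t)) m (k-m) := by
      rw [Finset.mul_sum]
      apply Finset.sum_congr rfl
      intro k hk
      have hkn : k ≤ n := by simpa [Nat.lt_succ_iff] using hk
      rw [mul_assoc, Finset.sum_mul]
      congr 1
      apply Finset.sum_congr rfl
      intro m hm
      have hmk : m ≤ k := by simpa [Nat.lt_succ_iff] using hm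
      have h7 : n - m - (k-m) = n - k := by omega
      show ct m * cb (k - m) * cb (n - k) = ct m * cb (k-m) * cb (n - m - (k-m))
      rw [h7]
    rw [h1, tri (fun m t => ct m * cb t * cb (n-m-t)) n]
    have h2 : ∀ m, m ∈ range (n+1) → ∑ t ∈ range (n+1-m), ct m * cb t * cb (n-m-t)
        = ct m * 4^(n-m) := by
      intro m hm
      have hmn : m ≤ n := by simpa [Nat.lt_succ_iff] using hm
      have he : n+1-m = (n-m)+1 := by omega
      rw [he]
      have : ∑ t ∈ range ((n-m)+1), ct m * cb t * cb (n-m-t)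
          = ct m * ∑ t ∈ range ((n-m)+1), cb t * cb ((n-m)-t) := by
        rw [Finset.mul_sum]
        apply Finset.sum_congr rfl
        intro t _
        have : n - m - t = (n-m) - t := by omega
        rw [this]; ring
      rw [this, conv_cb]
    rw [Finset.sum_congr rfl h2]
    have h3 := geom_cat (n+1)
    have h4 : ∀ m, m ∈ range (n+1) → ct m * (4:ℝ)^(n+1-1-m) = ct m * 4^(n-m) := by
      intro m _; norm_num
    rw [Finset.sum_congr rfl h4] at h3
    linarith
  have hCsum : ∑ k ∈ range (n+1), cb (k+1) * cb (n-k) = 4^(n+1) - cb (n+1) := by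
    have := conv_cb (n+1)
    rw [Finset.sum_range_succ' (fun m => cb m * cb (n+1-m)) (n+1)] at this
    simp only [Nat.succ_sub_succ, Nat.sub_zero, cb_zero, one_mul] at this
    linarith
  -- difference sum is zero
  have hdiff : ∑ k ∈ range (n+1), (cb (k+1) - 2 * ∑ m ∈ range (k+1), ct m * cb (k-m)) * cb (n-k) = 0 := by
    have : ∑ k ∈ range (n+1), (cb (k+1) - 2 * ∑ m ∈ range (k+1), ct m * cb (k-m)) * cb (n-k)
        = (∑ k ∈ range (n+1), cb (k+1) * cb (n-k))
          - ∑ k ∈ range (n+1), (2 * ∑ m ∈ range (k+1), ct m * cb (k-m)) * cb (n-k) := by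
      rw [← Finset.sum_sub_distrib]
      apply Finset.sum_congr rfl; intro k _; ring
    rw [this, hBsum, hCsum]; ring
  rw [sum_range_succ] at hdiff
  have hz : ∑ k ∈ range n, (cb (k+1) - 2 * ∑ m ∈ range (k+1), ct m * cb (k-m)) * cb (n-k) = 0 := by
    apply Finset.sum_eq_zero
    intro k hk
    have hkn : k < n := mem_range.mp hk
    rw [ih k hkn]
    ring
  rw [hz] at hdiff
  simp only [Nat.sub_self, cb_zero, mul_one, zero_add] at hdiff
  linarith

lemma partial_cb (N : ℕ) : ∑ n ∈ range (N+1), cb n / 4^n = (2*(N:ℝ)+1) * cb N / 4^N := by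
  induction N with
  | zero => simp [cb_zero]
  | succ N ih =>
      rw [sum_range_succ, ih]
      have h := cb_rec N
      have h4 : (4:ℝ)^N ≠ 0 := by positivity
      have e : (2*(N:ℝ)+1) * cb N / 4^N = (2*(N:ℝ)+1) * cb N * 4 / 4^(N+1) := by
        rw [pow_succ]; field_simp
      rw [e, ← add_div]
      have key : (2*(N:ℝ)+1) * cb N * 4 + cb (N+1) = (2*((N:ℝ)+1)+1) * cb (N+1) := by
        linear_combination -2 * h
      rw [key]
      push_cast
      ring

lemma choose_central (m : ℕ) : (Nat.choose (2*m) m : ℝ) = cb m := by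
  rw [cb, Nat.centralBinom_eq_two_mul_choose]

lemma two_choose (k : ℕ) : (Nat.choose (2*k+1) k : ℝ) = cb (k+1) / 2 := by
  have h : Nat.centralBinom (k+1) = 2 * Nat.choose (2*k+1) k := by
    rw [Nat.centralBinom]
    have : 2*(k+1) = (2*k+1)+1 := by ring
    rw [this, Nat.choose_succ_succ' (2*k+1) k]
    rw [Nat.choose_symm_half k]
    ring
  rw [cb, h]; push_cast; ring

lemma choose_pred (k : ℕ) : (Nat.choose (2*(k+1)) k : ℝ) = cb (k+1) - ct (k+1) := by
  have h := Nat.choose_succ_right_eq (2*(k+1)) k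
  -- choose (2k+2) (k+1) * (k+1) = choose (2k+2) k * (2k+2 - k)
  have hs : 2*(k+1) - k = k+2 := by omega
  rw [hs] at h
  have hcb : (Nat.choose (2*(k+1)) (k+1) : ℝ) = cb (k+1) := choose_central (k+1)
  have h' : cb (k+1) * ((k:ℝ)+1) = (Nat.choose (2*(k+1)) k : ℝ) * ((k:ℝ)+2) := by
    rw [← hcb]; exact_mod_cast h
  have hct := cat_cb (k+1)
  push_cast at hct
  have hne : ((k:ℝ)+2) ≠ 0 := by positivity
  have : (Nat.choose (2*(k+1)) k : ℝ) * ((k:ℝ)+2) = (cb (k+1) - ct (k+1)) * ((k:ℝ)+2) := by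
    linear_combination -h' + hct
  exact mul_right_cancel₀ hne this

lemma ichoose_eval (a b : ℤ) (a' b' : ℕ) (ha : a = a') (hb : b = b') (h : b' ≤ a') :
    (ichoose a b : ℝ) = (Nat.choose a' b' : ℝ) := by
  subst ha hb
  rw [ichoose]
  have h1 : (0:ℤ) ≤ b' := Int.ofNat_nonneg b'
  have h2 : (b':ℤ) ≤ a' := by exact_mod_cast h
  rw [if_pos ⟨h1, h2⟩, Int.toNat_natCast, Int.toNat_natCast]

lemma ichoose_neg (a b : ℤ) (h : b < 0) : (ichoose a b : ℝ) = 0 := by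
  rw [ichoose, if_neg]
  · simp
  · rintro ⟨h1, _⟩; omega

noncomputable def Fterm (i j : ℕ) : ℝ :=
  (Nat.choose (i - 1) (i / 2) : ℝ) *
    (ichoose ((j : ℤ) - (i : ℤ) - 1) ((j : ℤ) / 2 - (i : ℤ) / 2 - 1) : ℝ)

lemma conv_top (n : ℕ) : ∑ m ∈ range (n+1), cb m * cb (n+1-m) = 4^(n+1) - cb (n+1) := by
  have h := conv_cb (n+1)
  rw [sum_range_succ] at h
  simp only [Nat.sub_self, cb_zero, mul_one] at h
  linarith

lemma conv_mid (n : ℕ) : ∑ m ∈ range n, cb (m+1) * cb (n-m) = 4^(n+1) - 2*cb (n+1) := by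
  have h := conv_top n
  rw [Finset.sum_range_succ' (fun m => cb m * cb (n+1-m)) n] at h
  simp only [Nat.succ_sub_succ, Nat.sub_zero, cb_zero, one_mul] at h
  linarith

lemma conv_cat_mid (n : ℕ) :
    ∑ m ∈ range n, cb (m+1) * ct (n-m) = cb (n+2)/2 - cb (n+1) - ct (n+1) := by
  have hrefl := Finset.sum_range_reflect (fun m => cb (m+1) * ct (n-m)) n
  have hco : ∑ j ∈ range n, cb ((n-1-j)+1) * ct (n-(n-1-j)) = ∑ j ∈ range n, ct (j+1) * cb (n-j) := by
    apply Finset.sum_congr rfl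
    intro j hj
    have hjn : j < n := mem_range.mp hj
    have h1 : (n-1-j)+1 = n-j := by omega
    have h2 : n-(n-1-j) = j+1 := by omega
    rw [h1, h2]; ring
  rw [hco] at hrefl
  have h := conv_cat_cb (n+1)
  rw [Finset.sum_range_succ' (fun m => ct m * cb (n+1-m)) (n+1)] at h
  simp only [Nat.succ_sub_succ, Nat.sub_zero, ct_zero, one_mul] at h
  rw [sum_range_succ] at h
  simp only [Nat.sub_self, cb_zero, mul_one] at h
  rw [hrefl] at h
  linarith

lemma FA_odd (m : ℕ) : (Nat.choose ((1+2*m) - 1) ((1+2*m) / 2) : ℝ) = cb m := by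
  have e1 : (1+2*m) - 1 = 2*m := by omega
  have e2 : (1+2*m)/2 = m := by omega
  rw [e1, e2, choose_central]

lemma FA_even (m : ℕ) : (Nat.choose ((2*m+2) - 1) ((2*m+2) / 2) : ℝ) = cb (m+1) / 2 := by
  have e1 : (2*m+2) - 1 = 2*m+1 := by omega
  have e2 : (2*m+2)/2 = m+1 := by omega
  rw [e1, e2, Nat.choose_symm_half, two_choose]

lemma inner_even (n : ℕ) :
    ∑ i ∈ range (2*n+1), Fterm (1+i) (2*n+2) = 2^(2*n+1) - cb (n+1) / 2 := by
  rw [sum_range_odd]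
  have hg1 : ∀ m ∈ range (n+1), Fterm (1+2*m) (2*n+2) = cb m * cb (n-m) := by
    intro m hm
    have hm' : m ≤ n := by have := mem_range.mp hm; omega
    unfold Fterm
    rw [FA_odd m, ichoose_eval _ _ (2*(n-m)) (n-m) (by omega) (by omega) (by omega),
      choose_central]
  have hg2 : ∀ m ∈ range n, Fterm (1+(2*m+1)) (2*n+2) = cb (m+1) * cb (n-m) / 4 := by
    intro m hm
    have hm' : m < n := mem_range.mp hm
    have e : 1+(2*m+1) = 2*m+2 := by omega
    rw [e]
    unfold Fterm
    rw [FA_even m, ichoose_eval _ _ (2*(n-m-1)+1) (n-m-1) (by omega) (by omega) (by omega),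
      two_choose (n-m-1)]
    have e2 : n-m-1+1 = n-m := by omega
    rw [e2]; ring
  rw [Finset.sum_congr rfl hg1, Finset.sum_congr rfl hg2, conv_cb]
  have h2 : ∑ m ∈ range n, cb (m+1) * cb (n-m) / 4 = (4^(n+1) - 2*cb (n+1)) / 4 := by
    rw [← conv_mid n, ← Finset.sum_div]
  rw [h2]
  have hp : (2:ℝ)^(2*n+1) = 2 * 4^n := by
    rw [pow_succ, pow_mul]; norm_num; ring
  rw [hp, pow_succ]
  ring

lemma inner_odd (n : ℕ) :
    ∑ i ∈ range (2*n+2), Fterm (1+i) (2*n+3) = 4^(n+1) - cb (n+2) / 2 := by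
  have h22 : 2*n+2 = 2*(n+1) := by ring
  rw [h22, sum_range_even]
  have hg1 : ∀ m ∈ range (n+1), Fterm (1+2*m) (2*n+3) = cb m * (cb (n+1-m) / 2) := by
    intro m hm
    have hm' : m ≤ n := by have := mem_range.mp hm; omega
    unfold Fterm
    rw [FA_odd m, ichoose_eval _ _ (2*(n-m)+1) (n-m) (by omega) (by omega) (by omega),
      two_choose (n-m)]
    have e2 : n-m+1 = n+1-m := by omega
    rw [e2]
  have hg2 : ∀ m ∈ range n, Fterm (1+(2*m+1)) (2*n+3) = cb (m+1)/2 * (cb (n-m) - ct (n-m)) := by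
    intro m hm
    have hm' : m < n := mem_range.mp hm
    have e : 1+(2*m+1) = 2*m+2 := by omega
    rw [e]
    unfold Fterm
    rw [FA_even m, ichoose_eval _ _ (2*((n-m-1)+1)) (n-m-1) (by omega) (by omega) (by omega),
      choose_pred (n-m-1)]
    have e2 : n-m-1+1 = n-m := by omega
    rw [e2]
  -- last term of second sum (m = n) vanishes
  have hlast : Fterm (1+(2*n+1)) (2*n+3) = 0 := by
    have e : 1+(2*n+1) = 2*n+2 := by omega
    rw [e]
    unfold Fterm
    rw [ichoose_neg _ _ (by omega)]
    ring
  rw [sum_range_succ (fun m => Fterm (1+(2*m+1)) (2*n+3)) n, hlast,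
    Finset.sum_congr rfl hg1, Finset.sum_congr rfl hg2]
  have h1 : ∑ m ∈ range (n+1), cb m * (cb (n+1-m)/2) = (4^(n+1) - cb (n+1)) / 2 := by
    rw [← conv_top n, Finset.sum_div]
    exact Finset.sum_congr rfl (fun m _ => by ring)
  have h2 : ∑ m ∈ range n, cb (m+1)/2 * (cb (n-m) - ct (n-m))
      = ((4^(n+1) - 2*cb (n+1)) - (cb (n+2)/2 - cb (n+1) - ct (n+1))) / 2 := by
    rw [← conv_mid n, ← conv_cat_mid n, ← Finset.sum_sub_distrib, Finset.sum_div]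
    exact Finset.sum_congr rfl (fun m _ => by ring)
  rw [h1, h2]
  have := cb_succ (n+1)
  linarith

theorem double_sum_second_moment (L : ℕ) (hL : 1 ≤ L) :
    ∑ i ∈ Finset.Icc 1 (2 * L), ∑ j ∈ Finset.Icc (i + 1) (2 * L),
        (Nat.choose (i - 1) (i / 2) : ℝ) *
          (ichoose ((j : ℤ) - (i : ℤ) - 1) ((j : ℤ) / 2 - (i : ℤ) / 2 - 1) : ℝ) *
          (1 / 2 ^ j) =
      ((L : ℝ) + 3 / 2) - (3 * (L : ℝ) + 3 / 2) * (Nat.choose (2 * L) L : ℝ) / 4 ^ L := by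
  obtain ⟨K, rfl⟩ : ∃ K, L = K + 1 := ⟨L - 1, by omega⟩
  rw [choose_central (K+1)]
  -- step 1: rewrite summand as Fterm i j * (1/2^j)
  have hsum : ∀ i j : ℕ,
      (Nat.choose (i - 1) (i / 2) : ℝ) *
        (ichoose ((j : ℤ) - (i : ℤ) - 1) ((j : ℤ) / 2 - (i : ℤ) / 2 - 1) : ℝ) * (1 / 2 ^ j)
      = Fterm i j * (1 / 2 ^ j) := fun i j => rfl
  simp only [hsum]
  -- step 2: swap order of summation
  rw [Finset.sum_comm' (t' := Finset.Icc 1 (2*(K+1))) (s' := fun j => Finset.Icc 1 (j-1))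
    (by intro i j; simp only [mem_Icc]; omega)]
  -- step 3: pull out the weight and reduce to H
  have hH : ∀ j : ℕ, ∑ i ∈ Finset.Icc 1 (j-1), Fterm i j * (1/2^j)
      = (∑ i ∈ Finset.Icc 1 (j-1), Fterm i j) * (1/2^j) := by
    intro j; rw [Finset.sum_mul]
  simp only [hH]
  set H : ℕ → ℝ := fun j => (∑ i ∈ Finset.Icc 1 (j-1), Fterm i j) * (1/2^j) with hHdef
  -- step 4: convert Icc to range and peel j = 1
  rw [← Finset.Ico_add_one_right_eq_Icc, Finset.sum_Ico_eq_sum_range]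
  have hrange : 2*(K+1) + 1 - 1 = 2*K + 1 + 1 := by omega
  rw [hrange, Finset.sum_range_succ' (fun t => H (1+t)) (2*K+1)]
  have hH1 : H (1+0) = 0 := by simp [hHdef]
  rw [hH1, add_zero]
  -- step 5: parity split
  rw [sum_range_odd (fun t => H (1+(t+1))) K]
  -- step 6: evaluate H at even and odd arguments
  have hev : ∀ m ∈ range (K+1), H (1+(2*m+1)) = (2^(2*m+1) - cb (m+1)/2) * (1/2^(2*m+2)) := by
    intro m _
    have e : 1+(2*m+1) = 2*m+2 := by omega
    rw [e, hHdef]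
    have e2 : (2*m+2) - 1 = 2*m+1 := by omega
    simp only [e2]
    rw [← Finset.Ico_add_one_right_eq_Icc, Finset.sum_Ico_eq_sum_range]
    have e3 : 2*m+1+1-1 = 2*m+1 := by omega
    rw [e3, inner_even m]
  have hod : ∀ m ∈ range K, H (1+(2*m+1+1)) = (4^(m+1) - cb (m+2)/2) * (1/2^(2*m+3)) := by
    intro m _
    have e : 1+(2*m+1+1) = 2*m+3 := by omega
    rw [e, hHdef]
    have e2 : (2*m+3) - 1 = 2*m+2 := by omega
    simp only [e2]
    rw [← Finset.Ico_add_one_right_eq_Icc, Finset.sum_Ico_eq_sum_range]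
    have e3 : 2*m+2+1-1 = 2*m+2 := by omega
    rw [e3, inner_odd m]
  rw [Finset.sum_congr rfl hev, Finset.sum_congr rfl hod]
  -- step 7: final algebra
  have t1 : ∀ m ∈ range (K+1), (2^(2*m+1) - cb (m+1)/2) * ((1:ℝ)/2^(2*m+2))
      = 1/2 - (cb (m+1)/4^(m+1))/2 := by
    intro m _
    have hp : (2:ℝ)^(2*m+2) = 4^(m+1) := by
      rw [show 2*m+2 = 2*(m+1) by ring, pow_mul]; norm_num
    have hp1 : (2:ℝ)^(2*m+1) = 4^(m+1)/2 := by
      rw [← hp]; ring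
    have h4 : (4:ℝ)^(m+1) ≠ 0 := by positivity
    rw [hp, hp1]
    rw [mul_one_div, sub_div, div_div]
    rw [show (2:ℝ) * 4^(m+1) = 4^(m+1) * 2 by ring, ← div_div, div_self h4]
    rw [div_right_comm]
  have t2 : ∀ m ∈ range K, ((4:ℝ)^(m+1) - cb (m+2)/2) * ((1:ℝ)/2^(2*m+3))
      = 1/2 - cb (m+2)/4^(m+2) := by
    intro m _
    have hp : (2:ℝ)^(2*m+3) = 4^(m+1) * 2 := by
      rw [show 2*m+3 = 2*(m+1)+1 by ring, pow_succ, pow_mul]; norm_num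
    have hp2 : (4:ℝ)^(m+2) = 4^(m+1) * 4 := by rw [pow_succ]
    have h4 : (4:ℝ)^(m+1) ≠ 0 := by positivity
    rw [hp, hp2]
    field_simp
    ring
  rw [Finset.sum_congr rfl t1, Finset.sum_congr rfl t2]
  rw [Finset.sum_sub_distrib, Finset.sum_sub_distrib]
  rw [Finset.sum_const, Finset.sum_const, card_range, card_range]
  -- partial sums of q n = cb n / 4^n
  have hP := partial_cb (K+1)
  have hsplit1 : ∑ n ∈ range (K+2), cb n / 4^n
      = (∑ m ∈ range (K+1), cb (m+1) / 4^(m+1)) + cb 0 / 4^0 :=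
    Finset.sum_range_succ' (fun n => cb n / 4^n) (K+1)
  have hsplit2 : ∑ m ∈ range (K+1), cb (m+1) / 4^(m+1)
      = (∑ m ∈ range K, cb (m+2) / 4^(m+2)) + cb 1 / 4^1 :=
    Finset.sum_range_succ' (fun m => cb (m+1) / 4^(m+1)) K
  rw [hsplit1, hsplit2] at hP
  rw [cb_zero, cb_one] at hP
  norm_num at hP
  have hq1 : ∑ m ∈ range (K+1), (cb (m+1)/4^(m+1))/2
      = ((∑ m ∈ range K, cb (m+2) / 4^(m+2)) + 1/2) / 2 := by
    rw [← Finset.sum_div, hsplit2, cb_one]; norm_num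
  rw [hq1]
  simp only [nsmul_eq_mul]
  push_cast
  linear_combination (-3/2 : ℝ) * hP
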